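/- Let G be a group with a choice of generators w ↦ w̄ from W such that the word metric on G satisfies the four-point condition with constant δ ≥ 0. Let κ > 0 and let g_1, …, g_k be elements of G such that d(g_i^e, g_j^f) ≥ κ + 2δ + max(|g_i|, |g_j|) for all 1 ≤ i, j ≤ k and e, f ∈ {+1, −1} except when i = j and e = f. Then for every freely reduced word g_{i_1}^{e_1} ⋯ g_{i_t}^{e_t} (a nonempty sequence of pairs (i_ℓ, e_ℓ) with no ℓ such that i_ℓ = i_{ℓ+1} and e_ℓ = −e_{ℓ+1}), one has |g_{i_1}^{e_1} ⋯ g_{i_t}^{e_t}| ≥ t·κ > 0; in particular g_1, …, g_k freely generate a free subgroup of rank k of G, i.e., the homomorphism from the free group on k generators to G sending the i-th free generator to g_i is injective. -/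

import Mathlib

open Filter

namespace GenericSubgroups

/-- A word over the alphabet `Fin m × Bool` (generator index, with `true` = formal inverse). -/
abbrev Word (m : ℕ) := List (Fin m × Bool)

/-- The disk of radius `n` : words of length at most `n`. -/
def ball (m n : ℕ) : Set (Word m) := {w | w.length ≤ n}

/-- The sphere of radius `n` : words of length exactly `n`. -/
def sphere (m n : ℕ) : Set (Word m) := {w | w.length = n}

/-- A set of words is exponentially negligible. -/
def ExpNegligible {m : ℕ} (X : Set (Word m)) : Prop :=
  ∃ α : ℝ, 0 < α ∧ α < 1 ∧
    ∀ᶠ n in atTop, ((X ∩ ball m n).ncard : ℝ) / ((ball m n).ncard : ℝ) ≤ α ^ n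

/-- A set of words is exponentially generic if its complement is exponentially negligible. -/
def ExpGeneric {m : ℕ} (X : Set (Word m)) : Prop := ExpNegligible Xᶜ

/-- Disk of radius `n` in the set of `k`-tuples of words. -/
def ballK (m k n : ℕ) : Set (Fin k → Word m) := {w | ∀ i, (w i).length ≤ n}

def ExpNegligibleK {m k : ℕ} (X : Set (Fin k → Word m)) : Prop :=
  ∃ α : ℝ, 0 < α ∧ α < 1 ∧
    ∀ᶠ n in atTop, ((X ∩ ballK m k n).ncard : ℝ) / ((ballK m k n).ncard : ℝ) ≤ α ^ n

def ExpGenericK {m k : ℕ} (X : Set (Fin k → Word m)) : Prop := ExpNegligibleK Xᶜ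

variable {G : Type*} [Group G]

/-- Evaluation of a word in `G`, determined by the family `g` of generators. -/
def eval {m : ℕ} (g : Fin m → G) (w : Word m) : G :=
  (w.map (fun p => if p.2 then (g p.1)⁻¹ else g p.1)).prod

/-- Word length of an element of `G`. -/
noncomputable def wlen {m : ℕ} (g : Fin m → G) (x : G) : ℕ :=
  sInf {n | ∃ w : Word m, w.length = n ∧ eval g w = x}

/-- Word metric on `G`. -/
noncomputable def wdist {m : ℕ} (g : Fin m → G) (x y : G) : ℕ := wlen g (x⁻¹ * y)

/-- Words of length exactly `n` representing the identity. -/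
def V {m : ℕ} (g : Fin m → G) (n : ℕ) : Set (Word m) :=
  {w | w.length = n ∧ eval g w = 1}

/-- The gross cogrowth `θ = limsup (1/n) log_{2m} |V_n|`. -/
noncomputable def cogrowth {m : ℕ} (g : Fin m → G) : ℝ :=
  limsup (fun n : ℕ => Real.logb (2 * m : ℝ) ((V g n).ncard : ℝ) / (n : ℝ)) atTop

/-- The four-point (quadrilateral) condition with constant `δ` for the word metric. -/
def FourPoint {m : ℕ} (g : Fin m → G) (δ : ℝ) : Prop :=
  ∀ p q r s : G,
    (wdist g p s : ℝ) + (wdist g q r : ℝ) ≤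
      2 * δ + max ((wdist g p q : ℝ) + (wdist g r s : ℝ)) ((wdist g p r : ℝ) + (wdist g q s : ℝ))

/-- The Gromov product `(x|y)_1` with respect to the word metric. -/
noncomputable def gp {m : ℕ} (g : Fin m → G) (x y : G) : ℝ :=
  ((wlen g x : ℝ) + (wlen g y : ℝ) - (wlen g (x⁻¹ * y) : ℝ)) / 2

/-- `x^e` where `e : Bool`, `true` meaning inverse. -/
def powB (x : G) (e : Bool) : G := if e then x⁻¹ else x

/-- Formal inverse of a word. -/
def winv {m : ℕ} (w : Word m) : Word m := (w.reverse).map (fun p => (p.1, !p.2))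


section Aux

variable {m : ℕ} (g : Fin m → G)

lemma eval_nil' : eval g ([] : Word m) = 1 := by simp [eval]

lemma eval_append' (w₁ w₂ : Word m) : eval g (w₁ ++ w₂) = eval g w₁ * eval g w₂ := by
  simp [eval]

lemma eval_winv' (w : Word m) : eval g (winv w) = (eval g w)⁻¹ := by
  induction w with
  | nil => simp [winv, eval]
  | cons p w ih =>
    have hw : winv (p :: w) = winv w ++ [(p.1, !p.2)] := by simp [winv]
    rw [hw, eval_append', ih]
    cases hb : p.2 <;> simp [eval, hb, mul_inv_rev]

lemma wlen_le' {x : G} (w : Word m) (hw : eval g w = x) : wlen g x ≤ w.length :=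
  Nat.sInf_le ⟨w, rfl, hw⟩

lemma exists_min' (hsurj : Function.Surjective (eval g)) (x : G) :
    ∃ w : Word m, w.length = wlen g x ∧ eval g w = x := by
  obtain ⟨w, hw⟩ := hsurj x
  have hne : {n | ∃ w : Word m, w.length = n ∧ eval g w = x}.Nonempty :=
    ⟨w.length, w, rfl, hw⟩
  exact Nat.sInf_mem hne

lemma wlen_one' : wlen g (1 : G) = 0 :=
  Nat.le_zero.mp (wlen_le' g [] (eval_nil' g))

lemma wlen_inv_le' (hsurj : Function.Surjective (eval g)) (x : G) :
    wlen g x⁻¹ ≤ wlen g x := by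
  obtain ⟨w, hl, he⟩ := exists_min' g hsurj x
  calc wlen g x⁻¹ ≤ (winv w).length := wlen_le' g _ (by rw [eval_winv', he])
    _ = w.length := by simp [winv]
    _ = wlen g x := hl

lemma wlen_inv' (hsurj : Function.Surjective (eval g)) (x : G) :
    wlen g x⁻¹ = wlen g x :=
  le_antisymm (wlen_inv_le' g hsurj x) (by simpa using wlen_inv_le' g hsurj x⁻¹)

lemma wlen_mul_le' (hsurj : Function.Surjective (eval g)) (x y : G) :
    wlen g (x * y) ≤ wlen g x + wlen g y := by
  obtain ⟨w₁, hl₁, he₁⟩ := exists_min' g hsurj x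
  obtain ⟨w₂, hl₂, he₂⟩ := exists_min' g hsurj y
  calc wlen g (x * y) ≤ (w₁ ++ w₂).length :=
        wlen_le' g _ (by rw [eval_append', he₁, he₂])
    _ = wlen g x + wlen g y := by rw [List.length_append, hl₁, hl₂]

lemma wdist_symm' (hsurj : Function.Surjective (eval g)) (x y : G) :
    wdist g x y = wdist g y x := by
  unfold wdist
  rw [← wlen_inv' g hsurj (y⁻¹ * x)]
  simp [mul_inv_rev]

lemma powB_inv' (x : G) (e : Bool) : (powB x (!e))⁻¹ = powB x e := by
  cases e <;> simp [powB]

lemma wlen_powB' (hsurj : Function.Surjective (eval g)) (x : G) (e : Bool) :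
    wlen g (powB x e) = wlen g x := by
  cases e <;> simp [powB, wlen_inv' g hsurj]

end Aux

/-- if `d(g_i^e, g_j^f) ≥ κ + 2δ + max(|g_i|, |g_j|)` for all `i, j` and
signs `e, f` except when `i = j` and `e = f`, then every freely reduced word of length
`t` in `g₁, …, g_k` has word length at least `tκ > 0`; in particular `g₁, …, g_k`
freely generate a free subgroup of rank `k`. -/
theorem free_basis_of_separated (m k : ℕ) (hm : 2 ≤ m) {G : Type*} [Group G]
    (g : Fin m → G) (hsurj : Function.Surjective (eval g))
    (δ : ℝ) (hδ : 0 ≤ δ) (h4 : FourPoint g δ)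
    (κ : ℝ) (hκ : 0 < κ) (a : Fin k → G)
    (h : ∀ i j : Fin k, ∀ e f : Bool, ¬(i = j ∧ e = f) →
      κ + 2 * δ + (max (wlen g (a i)) (wlen g (a j)) : ℝ)
        ≤ (wdist g (powB (a i) e) (powB (a j) f) : ℝ)) :
    (∀ L : List (Fin k × Bool), L ≠ [] →
      (∀ (u v : List (Fin k × Bool)) (p q : Fin k × Bool),
        L = u ++ p :: q :: v → ¬(p.1 = q.1 ∧ p.2 ≠ q.2)) →
      (L.length : ℝ) * κ ≤ (wlen g ((L.map fun p => powB (a p.1) p.2).prod) : ℝ) ∧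
        0 < (L.length : ℝ) * κ) ∧
    Function.Injective (FreeGroup.lift a : FreeGroup (Fin k) →* G) := by
  -- every generator is long
  have hgen : ∀ i : Fin k, κ + 2 * δ ≤ (wlen g (a i) : ℝ) := by
    intro i
    have h1 := h i i true false (by simp)
    have h2 : wdist g (powB (a i) true) (powB (a i) false) = wlen g (a i * a i) := by
      simp [wdist, powB]
    have h3 : wlen g (a i * a i) ≤ wlen g (a i) + wlen g (a i) := wlen_mul_le' g hsurj _ _
    rw [h2, max_self] at h1
    have h3' : (wlen g (a i * a i) : ℝ) ≤ (wlen g (a i) : ℝ) + (wlen g (a i) : ℝ) := by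
      exact_mod_cast h3
    linarith
  have main : ∀ L : List (Fin k × Bool), L ≠ [] →
      (∀ (u v : List (Fin k × Bool)) (p q : Fin k × Bool),
        L = u ++ p :: q :: v → ¬(p.1 = q.1 ∧ p.2 ≠ q.2)) →
      (L.length : ℝ) * κ ≤ (wlen g ((L.map fun p => powB (a p.1) p.2).prod) : ℝ) ∧
        0 < (L.length : ℝ) * κ := by
    intro L hL hred
    set φ : Fin k × Bool → G := fun p => powB (a p.1) p.2 with hφ
    set x : ℕ → G := fun ℓ => ((L.take ℓ).map φ).prod with hx
    have hx0 : x 0 = 1 := by simp [hx]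
    have hstep : ∀ ℓ (hℓ : ℓ < L.length), x (ℓ + 1) = x ℓ * φ L[ℓ] := by
      intro ℓ hℓ
      have htake : L.take (ℓ + 1) = L.take ℓ ++ [L[ℓ]] := by
        rw [List.take_succ, List.getElem?_eq_getElem hℓ]; rfl
      simp only [hx, htake, List.map_append, List.prod_append, List.map_cons,
        List.map_nil, List.prod_cons, List.prod_nil, mul_one]
    -- key inductive step : distances grow by κ at each step
    have Q : ∀ ℓ, ℓ + 1 ≤ L.length →
        (wlen g (x ℓ) : ℝ) + κ ≤ (wlen g (x (ℓ + 1)) : ℝ) := by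
      intro ℓ
      induction ℓ with
      | zero =>
        intro h1
        have h0 : 0 < L.length := h1
        rw [hstep 0 h0, hx0, one_mul, wlen_one']
        simp only [hφ]
        rw [wlen_powB' g hsurj]
        have := hgen (L[0]'h0).1
        push_cast
        linarith
      | succ n ih =>
        intro h2
        have hn : n < L.length := by omega
        have hn1 : n + 1 < L.length := by omega
        set p : Fin k × Bool := L[n]'hn with hp
        set q : Fin k × Bool := L[n+1]'hn1 with hq
        have ih' := ih (by omega)
        -- decomposition of L showing p, q adjacent
        have hdec : L = L.take n ++ p :: q :: L.drop (n + 2) := by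
          conv_lhs => rw [← List.take_append_drop n L]
          congr 1
          rw [List.drop_eq_getElem_cons hn, List.drop_eq_getElem_cons hn1]
        have hnred := hred (L.take n) (L.drop (n + 2)) p q hdec
        have hexc : ¬(p.1 = q.1 ∧ (!p.2) = q.2) := by
          intro ⟨ha1, ha2⟩
          exact hnred ⟨ha1, by rw [← ha2]; cases p.2 <;> simp⟩
        have hh := h p.1 q.1 (!p.2) q.2 hexc
        -- the points
        have hxn1 : x (n + 1) = x n * φ p := hstep n hn
        have hxn2 : x (n + 2) = x n * φ p * φ q := by
          rw [hstep (n + 1) hn1, hxn1]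
        -- distance identities
        have e2 : wdist g (x (n + 2)) (x n) = wlen g (φ p * φ q) := by
          rw [wdist_symm' g hsurj]
          unfold wdist
          rw [hxn2]
          congr 1
          group
        have e3 : wdist g (x n) (x (n + 1)) = wlen g (a p.1) := by
          unfold wdist
          rw [hxn1, inv_mul_cancel_left]
          exact wlen_powB' g hsurj _ _
        have e4 : wdist g (x (n + 2)) (x (n + 1)) = wlen g (a q.1) := by
          rw [wdist_symm' g hsurj]
          unfold wdist
          rw [hxn2, hxn1]
          have : (x n * φ p)⁻¹ * (x n * φ p * φ q) = φ q := by group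
          rw [this]
          exact wlen_powB' g hsurj _ _
        have e7 : (wdist g (powB (a p.1) (!p.2)) (powB (a q.1) q.2) : ℕ) =
            wlen g (φ p * φ q) := by
          unfold wdist
          rw [powB_inv']
        have e1 : ∀ z : G, wdist g 1 z = wlen g z := by intro z; simp [wdist]
        -- four point condition
        have H4 := h4 1 (x (n + 2)) (x n) (x (n + 1))
        rw [e1, e1, e1, e2, e3, e4] at H4
        rw [e7] at hh
        set un : ℝ := (wlen g (x n) : ℝ)
        set un1 : ℝ := (wlen g (x (n + 1)) : ℝ)
        set un2 : ℝ := (wlen g (x (n + 2)) : ℝ)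
        set sp : ℝ := (wlen g (a p.1) : ℝ)
        set sq : ℝ := (wlen g (a q.1) : ℝ)
        set C : ℝ := (wlen g (φ p * φ q) : ℝ)
        have hmaxpq : (max (wlen g (a p.1)) (wlen g (a q.1)) : ℝ) = max sp sq := by
          push_cast; rfl
        rw [hmaxpq] at hh
        have hsp : sp ≤ max sp sq := le_max_left _ _
        have hsq : sq ≤ max sp sq := le_max_right _ _
        rcases max_choice (un2 + sp) (un + sq) with hM | hM <;> rw [hM] at H4 <;> linarith
    -- accumulate
    have R : ∀ ℓ, ℓ ≤ L.length → (ℓ : ℝ) * κ ≤ (wlen g (x ℓ) : ℝ) := by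
      intro ℓ
      induction ℓ with
      | zero => intro _; simp [hx0, wlen_one']
      | succ n ih =>
        intro hn
        have h1 := ih (by omega)
        have h2 := Q n (by omega)
        push_cast
        linarith
    have hlen : 0 < L.length := List.length_pos_iff.mpr hL
    have hxfull : x L.length = (L.map φ).prod := by
      simp only [hx, List.take_length]
    constructor
    · have := R L.length le_rfl
      rw [hxfull] at this
      exact this
    · have : (1 : ℝ) ≤ (L.length : ℝ) := by exact_mod_cast hlen
      nlinarith
  refine ⟨main, ?_⟩
  rw [injective_iff_map_eq_one]
  intro w hw
  by_contra hne
  have hLnil : w.toWord ≠ [] := fun hnil => hne (FreeGroup.toWord_eq_nil_iff.mp hnil)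
  set L : List (Fin k × Bool) := w.toWord.map (fun p => (p.1, !p.2)) with hLdef
  have hLne : L ≠ [] := by
    simp only [hLdef, ne_eq, List.map_eq_nil_iff]
    exact hLnil
  have hredL : ∀ (u v : List (Fin k × Bool)) (p q : Fin k × Bool),
      L = u ++ p :: q :: v → ¬(p.1 = q.1 ∧ p.2 ≠ q.2) := by
    intro u v p q hdec ⟨h1, h2⟩
    have hq2 : q.2 = !p.2 := by revert h2; cases p.2 <;> cases q.2 <;> simp
    have himg : w.toWord = L.map (fun p => (p.1, !p.2)) := by
      simp only [hLdef, List.map_map]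
      rw [show ((fun p : Fin k × Bool => (p.1, !p.2)) ∘ fun p : Fin k × Bool => (p.1, !p.2))
          = id by funext r; simp]
      simp
    have : FreeGroup.reduce w.toWord =
        u.map (fun p => (p.1, !p.2)) ++ (p.1, !p.2) :: (p.1, !(!p.2)) :: v.map (fun p => (p.1, !p.2)) := by
      rw [FreeGroup.reduce_toWord, himg, hdec]
      simp only [List.map_append, List.map_cons]
      rw [hq2, ← h1]
    exact FreeGroup.reduce.not this
  obtain ⟨hineq, hpos⟩ := main L hLne hredL
  have hprod : (L.map fun p => powB (a p.1) p.2).prod = FreeGroup.lift a w := by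
    conv_rhs => rw [← FreeGroup.mk_toWord (x := w)]
    rw [FreeGroup.lift_mk]
    simp only [hLdef, List.map_map]
    congr 1
    apply List.map_congr_left
    intro r _
    cases hb : r.2 <;> simp [Function.comp, powB, hb]
  rw [hprod, hw, wlen_one'] at hineq
  norm_num at hineq
  linarith

end GenericSubgroups
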